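/- The normalizing constant A(α,β) = Σ_{x ∈ ℕ^P} exp(Σ_j (α_j x_j − log(x_j!)) − Σ_{j<l} β_{jl} F(x_j) F(x_l)) is finite whenever F is bounded. -/
import Mathlib


open scoped BigOperators

noncomputable def nodeSum {P : ℕ} (α : Fin P → ℝ) (x : Fin P → ℕ) : ℝ :=
  ∑ j, (α j * (x j : ℝ) - Real.log (Nat.factorial (x j)))

noncomputable def edgeSum {P : ℕ} (β : Fin P → Fin P → ℝ) (F : ℕ → ℝ) (x : Fin P → ℕ) : ℝ :=
  ∑ j, ∑ l, if j < l then β j l * F (x j) * F (x l) else 0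

/-- Unnormalized weight of the pairwise MRF for counts. -/
noncomputable def w {P : ℕ} (α : Fin P → ℝ) (β : Fin P → Fin P → ℝ) (F : ℕ → ℝ)
    (x : Fin P → ℕ) : ℝ :=
  Real.exp (nodeSum α x - edgeSum β F x)

/-- Normalizing constant A(α,β). -/
noncomputable def Anorm {P : ℕ} (α : Fin P → ℝ) (β : Fin P → Fin P → ℝ) (F : ℕ → ℝ) : ℝ :=
  ∑' x : Fin P → ℕ, w α β F x

/-- The transformation F(x) = (arctan x)^θ. -/
noncomputable def Fpow (θ : ℝ) : ℕ → ℝ := fun n => Real.arctan (n : ℝ) ^ θ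

lemma summable_pi_prod : ∀ (P : ℕ) (g : Fin P → ℕ → ℝ),
    (∀ j, Summable (g j)) → (∀ j n, 0 ≤ g j n) →
    Summable (fun x : Fin P → ℕ => ∏ j, g j (x j)) := by
  intro P
  induction P with
  | zero => intro g _ _; exact .of_finite
  | succ P ih =>
    intro g hs h0
    have h1 : Summable (fun n => g 0 n) := hs 0
    have h2 : Summable (fun y : Fin P → ℕ => ∏ j : Fin P, g j.succ (y j)) :=
      ih (fun j => g j.succ) (fun j => hs j.succ) (fun j n => h0 j.succ n)
    have h3 : 0 ≤ (fun n => g 0 n) := fun n => h0 0 n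
    have h4 : 0 ≤ (fun y : Fin P → ℕ => ∏ j : Fin P, g j.succ (y j)) :=
      fun y => Finset.prod_nonneg fun j _ => h0 j.succ (y j)
    have key : Summable (fun p : ℕ × (Fin P → ℕ) => g 0 p.1 * ∏ j : Fin P, g j.succ (p.2 j)) :=
      Summable.mul_of_nonneg (f := fun n => g 0 n)
        (g := fun y : Fin P → ℕ => ∏ j : Fin P, g j.succ (y j)) h1 h2 h3 h4
    rw [← Equiv.summable_iff (Fin.consEquiv fun _ : Fin (P+1) => ℕ)]
    have heq : ((fun x : Fin (P+1) → ℕ => ∏ j, g j (x j)) ∘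
        (Fin.consEquiv fun _ : Fin (P+1) => ℕ))
        = fun p : ℕ × (Fin P → ℕ) => g 0 p.1 * ∏ j : Fin P, g j.succ (p.2 j) := by
      funext p
      simp [Fin.consEquiv, Fin.prod_univ_succ]
    rw [heq]
    exact key

theorem stmt1 (P : ℕ) (α : Fin P → ℝ) (β : Fin P → Fin P → ℝ)
    (F : ℕ → ℝ) (U : ℝ) (hF : ∀ x, |F x| ≤ U) :
    Summable (fun x : Fin P → ℕ => w α β F x) := by
  set V := |U| with hV
  have hFV : ∀ x, |F x| ≤ V := fun x => (hF x).trans (le_abs_self U)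
  -- per-coordinate summable bound
  set g : Fin P → ℕ → ℝ := fun j n => Real.exp (α j * n - Real.log (Nat.factorial n)) with hg
  have hg0 : ∀ j n, 0 ≤ g j n := fun j n => (Real.exp_pos _).le
  have hgs : ∀ j, Summable (g j) := by
    intro j
    have h1 : Summable (fun n : ℕ => Real.exp (α j) ^ n / (Nat.factorial n : ℝ)) :=
      Real.summable_pow_div_factorial _
    refine h1.congr fun n => ?_
    simp only [hg]
    rw [Real.exp_sub, Real.exp_log (by positivity : (0:ℝ) < (Nat.factorial n : ℝ)),
      mul_comm (α j) (n:ℝ), Real.exp_nat_mul]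
  set B : ℝ := ∑ j : Fin P, ∑ l : Fin P, |β j l| * V * V with hB
  have hedge : ∀ x : Fin P → ℕ, -B ≤ edgeSum β F x := by
    intro x
    have : |edgeSum β F x| ≤ B := by
      refine (Finset.abs_sum_le_sum_abs _ _).trans ?_
      refine Finset.sum_le_sum fun j _ => ?_
      refine (Finset.abs_sum_le_sum_abs _ _).trans ?_
      refine Finset.sum_le_sum fun l _ => ?_
      by_cases h : j < l
      · simp only [h, if_true]
        rw [abs_mul, abs_mul]
        have hV0 : 0 ≤ V := abs_nonneg U
        have hV0 : (0:ℝ) ≤ V := abs_nonneg U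
        exact mul_le_mul (mul_le_mul le_rfl (hFV _) (abs_nonneg _) (abs_nonneg _))
          (hFV _) (abs_nonneg _) (by positivity)
      · simp only [h, if_false, abs_zero]
        positivity
    linarith [(abs_le.mp this).1]
  have hbound : ∀ x : Fin P → ℕ, w α β F x ≤ Real.exp B * ∏ j, g j (x j) := by
    intro x
    have hle : nodeSum α x - edgeSum β F x ≤ B + nodeSum α x := by
      have := hedge x; linarith
    calc w α β F x = Real.exp (nodeSum α x - edgeSum β F x) := rfl
      _ ≤ Real.exp (B + nodeSum α x) := Real.exp_le_exp.mpr hle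
      _ = Real.exp B * ∏ j, g j (x j) := by
          rw [Real.exp_add]
          congr 1
          rw [nodeSum, Real.exp_sum]
  have hs : Summable (fun x : Fin P → ℕ => Real.exp B * ∏ j, g j (x j)) :=
    (summable_pi_prod P g hgs hg0).mul_left _
  exact Summable.of_nonneg_of_le (fun x => (Real.exp_pos _).le) hbound hs
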